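/- ∑_{n ≤ x} φ(n) · (1 − (1/2)^{⌊x/n⌋}) = (3/π²) · (1/2) · Li₂(1/2)/(1/2) · x² + O(x (log x)²) = (3/π²) · Li₂(1/2) · x² + O(x (log x)²) for every x ≥ 2, where Li₂(z) = ∑_{k≥1} z^k/k². -/

import Mathlib

open Finset ArithmeticFunction
open scoped ArithmeticFunction.Moebius

-- φ as Möbius convolution
lemma totient_eq_conv (n : ℕ) (hn : 0 < n) :
    (Nat.totient n : ℝ) = ∑ p ∈ n.divisorsAntidiagonal, (μ p.1 : ℝ) * (p.2 : ℝ) := by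
  have h := (ArithmeticFunction.sum_eq_iff_sum_mul_moebius_eq
    (R := ℝ) (f := fun d => (Nat.totient d : ℝ)) (g := fun d => (d : ℝ))).mp ?_ n hn
  · exact h.symm
  · intro m hm
    rw [← Nat.cast_sum]
    norm_cast
    exact Nat.sum_totient m

lemma key1 (M : ℕ) (f : ℕ → ℕ → ℝ) :
    ∑ n ∈ Icc 1 M, ∑ k ∈ Icc 1 (M / n), f n k
    = ∑ p ∈ (Icc 1 M ×ˢ Icc 1 M).filter (fun p => p.1 * p.2 ≤ M), f p.1 p.2 := by
  rw [Finset.sum_filter, Finset.sum_product]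
  refine Finset.sum_congr rfl fun n hn => ?_
  have hn1 : 1 ≤ n := (Finset.mem_Icc.mp hn).1
  rw [← Finset.sum_filter]
  refine (Finset.sum_subset ?_ ?_).symm
  · intro k hk
    simp only [Finset.mem_filter, Finset.mem_Icc] at hk ⊢
    exact ⟨hk.1.1, (Nat.le_div_iff_mul_le (by omega)).mpr (by rw [mul_comm]; exact hk.2)⟩
  · intro k hk hk2
    exfalso
    simp only [Finset.mem_filter, Finset.mem_Icc] at hk hk2
    have h1 := (Nat.le_div_iff_mul_le (show 0 < n by omega)).mp hk.2
    have hkM : k ≤ M := le_trans hk.2 (Nat.div_le_self M n)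
    exact hk2 ⟨⟨hk.1, hkM⟩, by rw [mul_comm]; exact h1⟩


lemma key_swap (M : ℕ) (f : ℕ → ℕ → ℝ) :
    ∑ n ∈ Icc 1 M, ∑ k ∈ Icc 1 (M / n), f n k
    = ∑ k ∈ Icc 1 M, ∑ n ∈ Icc 1 (M / k), f n k := by
  rw [key1 M f, key1 M (fun k n => f n k)]
  refine Finset.sum_nbij' (fun p => Prod.swap p) (fun p => Prod.swap p) ?_ ?_ ?_ ?_ ?_ <;>
    simp only [Finset.mem_filter, Finset.mem_product, Prod.fst_swap, Prod.snd_swap,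
      Prod.swap_swap, implies_true] <;>
    intro p hp <;> exact ⟨⟨hp.1.2, hp.1.1⟩, by rw [mul_comm]; exact hp.2⟩

lemma key2 (M : ℕ) (f : ℕ → ℕ → ℝ) :
    ∑ n ∈ Icc 1 M, ∑ p ∈ n.divisorsAntidiagonal, f p.1 p.2
    = ∑ p ∈ (Icc 1 M ×ˢ Icc 1 M).filter (fun p => p.1 * p.2 ≤ M), f p.1 p.2 := by
  trans ∑ x ∈ (Icc 1 M).sigma (fun n => n.divisorsAntidiagonal), f x.2.1 x.2.2
  · exact (Finset.sum_sigma (Icc 1 M) (fun n => n.divisorsAntidiagonal) (fun x => f x.2.1 x.2.2)).symm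
  refine Finset.sum_nbij' (fun x => x.2) (fun p => ⟨p.1 * p.2, p⟩) ?_ ?_ ?_ ?_ ?_
  · rintro ⟨n, p⟩ hx
    simp only [Finset.mem_sigma, Finset.mem_Icc, Nat.mem_divisorsAntidiagonal] at hx
    obtain ⟨⟨hn1, hnM⟩, hpn, -⟩ := hx
    simp only [Finset.mem_filter, Finset.mem_product, Finset.mem_Icc]
    have h1 : 1 ≤ p.1 := by
      rcases Nat.eq_zero_or_pos p.1 with h | h
      · exfalso; rw [h, zero_mul] at hpn; omega
      · exact h
    have h2 : 1 ≤ p.2 := by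
      rcases Nat.eq_zero_or_pos p.2 with h | h
      · exfalso; rw [h, mul_zero] at hpn; omega
      · exact h
    refine ⟨⟨⟨h1, ?_⟩, ⟨h2, ?_⟩⟩, by rw [hpn]; exact hnM⟩
    · calc p.1 ≤ p.1 * p.2 := Nat.le_mul_of_pos_right _ h2
        _ ≤ M := by rw [hpn]; exact hnM
    · calc p.2 ≤ p.1 * p.2 := Nat.le_mul_of_pos_left _ h1
        _ ≤ M := by rw [hpn]; exact hnM
  · intro p hp
    simp only [Finset.mem_filter, Finset.mem_product, Finset.mem_Icc] at hp
    have hne : p.1 * p.2 ≠ 0 := Nat.mul_ne_zero (by omega) (by omega)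
    exact Finset.mem_sigma.mpr ⟨Finset.mem_Icc.mpr ⟨Nat.one_le_iff_ne_zero.mpr hne, hp.2⟩,
      Nat.mem_divisorsAntidiagonal.mpr ⟨rfl, hne⟩⟩
  · rintro ⟨n, p⟩ hx
    simp only [Finset.mem_sigma, Nat.mem_divisorsAntidiagonal] at hx
    simp only [Sigma.mk.inj_iff, heq_eq_eq]
    exact ⟨hx.2.1, trivial⟩
  · intro p hp
    rfl
  · intro x hx
    rfl

lemma moebius_summable : Summable (fun d : ℕ => |(μ d : ℝ) / (d : ℝ)^2|) := by
  apply Summable.of_nonneg_of_le (fun d => abs_nonneg _) (fun d => ?_)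
    (Real.summable_one_div_nat_pow.mpr (by norm_num : 1 < 2))
  rcases Nat.eq_zero_or_pos d with rfl | hd
  · simp
  rw [abs_div, abs_pow, Nat.abs_cast, div_le_div_iff₀ (by positivity) (by positivity), one_mul]
  calc |(μ d : ℝ)| * (d:ℝ)^2 ≤ 1 * (d:ℝ)^2 := by
        apply mul_le_mul_of_nonneg_right _ (by positivity)
        rw [← Int.cast_abs]
        exact_mod_cast ArithmeticFunction.abs_moebius_le_one
    _ = (d:ℝ)^2 := one_mul _

lemma moebius_summable' : Summable (fun d : ℕ => (μ d : ℝ) / (d : ℝ)^2) :=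
  summable_abs_iff.mp moebius_summable

lemma moebius_tsum : ∑' d : ℕ, (μ d : ℝ) / (d : ℝ)^2 = 6 / Real.pi^2 := by
  have h2 : (1 : ℝ) < (2 : ℂ).re := by norm_num
  have hz := ArithmeticFunction.LSeries_zeta_mul_Lseries_moebius h2
  rw [LSeries_zeta_eq_riemannZeta h2, riemannZeta_two] at hz
  have hterm : ∀ n : ℕ, LSeries.term (fun n => (μ n : ℂ)) 2 n
      = (((μ n : ℝ) / (n : ℝ)^2 : ℝ) : ℂ) := by
    intro n
    rcases Nat.eq_zero_or_pos n with rfl | hn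
    · simp [LSeries.term]
    · rw [LSeries.term_of_ne_zero (by omega)]
      rw [show ((2 : ℂ)) = ((2 : ℕ) : ℂ) by norm_num, Complex.cpow_natCast]
      push_cast
      ring
  have hL : LSeries (fun n => (μ n : ℂ)) 2 = ((∑' d : ℕ, (μ d : ℝ) / (d : ℝ)^2 : ℝ) : ℂ) := by
    rw [LSeries]
    rw [tsum_congr hterm, Complex.ofReal_tsum]
  rw [hL] at hz
  have hπ : (Real.pi : ℂ)^2 / 6 ≠ 0 := by
    simp only [ne_eq, div_eq_zero_iff, pow_eq_zero_iff, OfNat.ofNat_ne_zero, not_false_iff, or_false]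
    exact_mod_cast Real.pi_ne_zero
  field_simp at hz
  have hr : Real.pi^2 * (∑' d : ℕ, (μ d : ℝ) / (d : ℝ)^2) = 6 := by exact_mod_cast hz
  rw [eq_div_iff (pow_ne_zero 2 Real.pi_ne_zero)]
  linarith

lemma tail_sq (N : ℕ) (hN : 1 ≤ N) :
    ∑' i : ℕ, (1:ℝ) / ((i + (N + 1) : ℕ) : ℝ)^2 ≤ 1 / N := by
  have base : Summable (fun d : ℕ => (1:ℝ) / (d:ℝ)^2) :=
    Real.summable_one_div_nat_pow.mpr (by norm_num)
  have hsum : Summable (fun i : ℕ => (1:ℝ) / ((i + (N + 1) : ℕ) : ℝ)^2) := by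
    exact_mod_cast (summable_nat_add_iff (N + 1)).mpr base
  apply Summable.tsum_le_of_sum_le hsum
  intro u
  obtain ⟨m, hm⟩ := u.exists_nat_subset_range
  calc ∑ i ∈ u, (1:ℝ) / ((i + (N + 1) : ℕ) : ℝ)^2
      ≤ ∑ i ∈ Finset.range m, (1:ℝ) / ((i + (N + 1) : ℕ) : ℝ)^2 :=
        Finset.sum_le_sum_of_subset_of_nonneg hm (fun i _ _ => by positivity)
    _ = ∑ d ∈ Finset.Ico (N+1) (N+1+m), (1:ℝ) / ((d : ℕ) : ℝ)^2 := by
        rw [Finset.sum_Ico_eq_sum_range]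
        simp only [Nat.add_sub_cancel_left]
        exact Finset.sum_congr rfl fun i _ => by rw [add_comm i (N+1)]
    _ = ∑ d ∈ Finset.Ioc N (N+m), ((d : ℝ)^2)⁻¹ := by
        have h1 : N + 1 + m = N + m + 1 := by omega
        rw [h1, Finset.Ico_add_one_right_eq_Icc, Finset.Icc_add_one_left_eq_Ioc]
        exact Finset.sum_congr rfl fun d _ => one_div _
    _ ≤ (N : ℝ)⁻¹ - ((N + m : ℕ) : ℝ)⁻¹ :=
        sum_Ioc_inv_sq_le_sub (α := ℝ) (by omega) (by omega)
    _ ≤ 1 / N := by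
        rw [one_div]
        have : (0:ℝ) ≤ ((N + m : ℕ) : ℝ)⁻¹ := by positivity
        linarith

lemma moebius_partial (N : ℕ) (hN : 1 ≤ N) :
    |∑ d ∈ Icc 1 N, (μ d : ℝ) / (d : ℝ)^2 - 6 / Real.pi^2| ≤ 1 / (N : ℝ) := by
  set f : ℕ → ℝ := fun d => (μ d : ℝ) / (d : ℝ)^2 with hf
  have h0 : ∑ d ∈ Finset.range (N+1), f d = ∑ d ∈ Icc 1 N, f d := by
    rw [Finset.range_eq_Ico, Finset.Ico_add_one_right_eq_Icc,
      show Icc 0 N = insert 0 (Icc 1 N) from by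
        ext d; simp only [Finset.mem_Icc, Finset.mem_insert]; omega,
      Finset.sum_insert (by simp)]
    simp [hf]
  have base : Summable (fun d : ℕ => (1:ℝ) / (d:ℝ)^2) :=
    Real.summable_one_div_nat_pow.mpr (by norm_num)
  have hadd := Summable.sum_add_tsum_nat_add (f := f) (N + 1) moebius_summable'
  rw [h0, moebius_tsum] at hadd
  have hshift : Summable (fun i : ℕ => f (i + (N + 1))) :=
    (summable_nat_add_iff (N + 1)).mpr moebius_summable'
  have hs2 : Summable (fun i : ℕ => |f (i + (N + 1))|) := hshift.abs
  have habs : |∑' i : ℕ, f (i + (N + 1))| ≤ 1 / (N : ℝ) := by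
    have h1 : |∑' i : ℕ, f (i + (N + 1))| ≤ ∑' i : ℕ, |f (i + (N + 1))| := by
      simpa [Real.norm_eq_abs] using norm_tsum_le_tsum_norm (f := fun i : ℕ => f (i + (N + 1)))
        (by simpa [Real.norm_eq_abs] using hs2)
    refine h1.trans (le_trans (Summable.tsum_le_tsum (fun i => ?_) hs2 ?_) (tail_sq N hN))
    · show |(μ (i + (N+1)) : ℝ) / ((i + (N+1) : ℕ) : ℝ)^2| ≤ _
      rw [abs_div, abs_pow, Nat.abs_cast]
      gcongr
      · rw [← Int.cast_abs]; exact_mod_cast ArithmeticFunction.abs_moebius_le_one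
    · exact_mod_cast (summable_nat_add_iff (N + 1)).mpr base
  have heq : ∑ d ∈ Icc 1 N, f d - 6 / Real.pi ^ 2 = -(∑' i : ℕ, f (i + (N + 1))) := by
    linarith
  show |∑ d ∈ Icc 1 N, f d - 6 / Real.pi ^ 2| ≤ 1 / (N : ℝ)
  rw [heq, abs_neg]
  exact habs

lemma gauss (m : ℕ) : ∑ q ∈ Icc 1 m, (q:ℝ) = (m:ℝ) * ((m:ℝ) + 1) / 2 := by
  induction m with
  | zero => simp
  | succ n ih =>
    rw [Finset.sum_Icc_succ_top (by omega), ih]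
    push_cast; ring

lemma harm (N : ℕ) : ∑ d ∈ Icc 1 N, 1/(d:ℝ) ≤ Real.log N + 1 := by
  have h := harmonic_le_one_add_log N
  rw [harmonic_eq_sum_Icc] at h
  push_cast at h
  calc ∑ d ∈ Icc 1 N, 1/(d:ℝ) = ∑ d ∈ Icc 1 N, ((d:ℝ))⁻¹ := by
        exact Finset.sum_congr rfl fun d _ => one_div _
    _ ≤ Real.log N + 1 := by linarith

lemma phi_repr (N : ℕ) :
    ∑ n ∈ Icc 1 N, (Nat.totient n : ℝ)
      = ∑ d ∈ Icc 1 N, (μ d : ℝ) * (((N / d : ℕ) : ℝ) * (((N / d : ℕ) : ℝ) + 1) / 2) := by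
  rw [Finset.sum_congr rfl (fun n hn => totient_eq_conv n (Finset.mem_Icc.mp hn).1)]
  rw [key2 N (fun d q => (μ d : ℝ) * (q : ℝ)), ← key1 N (fun d q => (μ d : ℝ) * (q : ℝ))]
  refine Finset.sum_congr rfl fun d hd => ?_
  rw [← Finset.mul_sum, gauss]

lemma floor_div_bounds (N d : ℕ) (hd : 1 ≤ d) :
    ((N / d : ℕ) : ℝ) ≤ (N : ℝ) / (d : ℝ) ∧ (N : ℝ) / (d : ℝ) < ((N / d : ℕ) : ℝ) + 1 := by
  have hd0 : (0:ℝ) < (d:ℝ) := by exact_mod_cast hd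
  constructor
  · rw [le_div_iff₀ hd0]
    exact_mod_cast Nat.div_mul_le_self N d
  · rw [div_lt_iff₀ hd0]
    exact_mod_cast (Nat.div_lt_iff_lt_mul (show 0 < d by omega)).mp (Nat.lt_succ_self _)

lemma Td_close (N d : ℕ) (hd : 1 ≤ d) (hdN : d ≤ N) :
    |((N / d : ℕ) : ℝ) * (((N / d : ℕ) : ℝ) + 1) / 2 - (N:ℝ)^2 / (2 * (d:ℝ)^2)|
      ≤ (N:ℝ) / (d:ℝ) := by
  obtain ⟨h1, h2⟩ := floor_div_bounds N d hd
  set m : ℝ := ((N / d : ℕ) : ℝ)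
  set r : ℝ := (N : ℝ) / (d : ℝ)
  have hd0 : (0:ℝ) < (d:ℝ) := by exact_mod_cast hd
  have hr1 : 1 ≤ r := by
    rw [le_div_iff₀ hd0, one_mul]
    exact_mod_cast hdN
  have hm0 : 0 ≤ m := by positivity
  have hrsq : (N:ℝ)^2 / (2 * (d:ℝ)^2) = r^2 / 2 := by
    rw [show r = (N:ℝ)/(d:ℝ) from rfl, div_pow]
    ring
  rw [hrsq, abs_le]
  constructor <;> nlinarith [sq_nonneg (r - m)]

lemma phi_bound (N : ℕ) (hN : 1 ≤ N) :
    |(∑ n ∈ Icc 1 N, (Nat.totient n : ℝ)) - 3 / Real.pi^2 * (N:ℝ)^2|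
      ≤ 2 * (N:ℝ) * (Real.log N + 1) := by
  rw [phi_repr]
  have hsplit : ∑ d ∈ Icc 1 N, (μ d : ℝ) * (((N / d : ℕ) : ℝ) * (((N / d : ℕ) : ℝ) + 1) / 2)
      - 3 / Real.pi^2 * (N:ℝ)^2
      = (∑ d ∈ Icc 1 N, (μ d : ℝ) * (((N / d : ℕ) : ℝ) * (((N / d : ℕ) : ℝ) + 1) / 2
            - (N:ℝ)^2 / (2 * (d:ℝ)^2)))
        + (N:ℝ)^2 / 2 * ((∑ d ∈ Icc 1 N, (μ d : ℝ) / (d:ℝ)^2) - 6 / Real.pi^2) := by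
    have hkey : ∑ d ∈ Icc 1 N, (μ d : ℝ) * (((N / d : ℕ) : ℝ) * (((N / d : ℕ) : ℝ) + 1) / 2
            - (N:ℝ)^2 / (2 * (d:ℝ)^2))
        = (∑ d ∈ Icc 1 N, (μ d : ℝ) * (((N / d : ℕ) : ℝ) * (((N / d : ℕ) : ℝ) + 1) / 2))
          - (N:ℝ)^2 / 2 * ∑ d ∈ Icc 1 N, (μ d : ℝ) / (d:ℝ)^2 := by
      rw [Finset.mul_sum, ← Finset.sum_sub_distrib]
      refine Finset.sum_congr rfl fun d hd => ?_
      have hd1 := (Finset.mem_Icc.mp hd).1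
      have hd0 : ((d:ℝ)) ≠ 0 := by positivity
      field_simp
    rw [hkey]
    ring
  rw [hsplit]
  have hb1 : |∑ d ∈ Icc 1 N, (μ d : ℝ) * (((N / d : ℕ) : ℝ) * (((N / d : ℕ) : ℝ) + 1) / 2
      - (N:ℝ)^2 / (2 * (d:ℝ)^2))| ≤ (N:ℝ) * (Real.log N + 1) := by
    calc _ ≤ ∑ d ∈ Icc 1 N, |(μ d : ℝ) * (((N / d : ℕ) : ℝ) * (((N / d : ℕ) : ℝ) + 1) / 2
          - (N:ℝ)^2 / (2 * (d:ℝ)^2))| := Finset.abs_sum_le_sum_abs _ _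
      _ ≤ ∑ d ∈ Icc 1 N, (N:ℝ) / (d:ℝ) := by
          refine Finset.sum_le_sum fun d hd => ?_
          obtain ⟨hd1, hdN⟩ := Finset.mem_Icc.mp hd
          rw [abs_mul]
          calc |(μ d : ℝ)| * _ ≤ 1 * |(((N / d : ℕ) : ℝ) * (((N / d : ℕ) : ℝ) + 1) / 2
                - (N:ℝ)^2 / (2 * (d:ℝ)^2))| := by
                apply mul_le_mul_of_nonneg_right _ (abs_nonneg _)
                rw [← Int.cast_abs]
                exact_mod_cast ArithmeticFunction.abs_moebius_le_one
            _ ≤ (N:ℝ) / (d:ℝ) := by rw [one_mul]; exact Td_close N d hd1 hdN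
      _ = (N:ℝ) * ∑ d ∈ Icc 1 N, 1 / (d:ℝ) := by
          rw [Finset.mul_sum]
          exact Finset.sum_congr rfl fun d _ => by ring
      _ ≤ (N:ℝ) * (Real.log N + 1) := by
          apply mul_le_mul_of_nonneg_left (harm N) (by positivity)
  have hb2 : |(N:ℝ)^2 / 2 * ((∑ d ∈ Icc 1 N, (μ d : ℝ) / (d:ℝ)^2) - 6 / Real.pi^2)|
      ≤ (N:ℝ) / 2 := by
    rw [abs_mul]
    have h1 : |(N:ℝ)^2 / 2| = (N:ℝ)^2/2 := abs_of_nonneg (by positivity)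
    rw [h1]
    calc (N:ℝ)^2/2 * |_| ≤ (N:ℝ)^2/2 * (1 / (N:ℝ)) :=
          mul_le_mul_of_nonneg_left (moebius_partial N hN) (by positivity)
      _ = (N:ℝ)/2 := by
          have : ((N:ℝ)) ≠ 0 := by positivity
          field_simp
  have hlog : 0 ≤ Real.log N := Real.log_natCast_nonneg N
  calc |_ + _| ≤ _ + _ := abs_add_le _ _
    _ ≤ (N:ℝ) * (Real.log N + 1) + (N:ℝ)/2 := add_le_add hb1 hb2
    _ ≤ 2 * (N:ℝ) * (Real.log N + 1) := by
        have hN' : (1:ℝ) ≤ (N:ℝ) := by exact_mod_cast hN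
        nlinarith

lemma geom (m : ℕ) : ∑ k ∈ Icc 1 m, (1/2:ℝ)^k = 1 - (1/2:ℝ)^m := by
  induction m with
  | zero => simp
  | succ n ih =>
    rw [Finset.sum_Icc_succ_top (by omega), ih, pow_succ]
    ring

lemma Tsummable : Summable (fun j : ℕ => (1/2:ℝ)^(j+1)/((j:ℝ)+1)^2) := by
  apply Summable.of_nonneg_of_le (fun j => by positivity) (fun j => ?_)
    (summable_geometric_of_lt_one (by norm_num) (by norm_num : (1/2:ℝ) < 1))
  calc (1/2:ℝ)^(j+1)/((j:ℝ)+1)^2 ≤ (1/2:ℝ)^(j+1)/1 := by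
        gcongr
        · nlinarith [Nat.cast_nonneg (α := ℝ) j]
    _ ≤ (1/2:ℝ)^j := by
        rw [div_one, pow_succ]
        nlinarith [pow_nonneg (by norm_num : (0:ℝ) ≤ 1/2) j]

lemma T_partial (M : ℕ) :
    |(∑ k ∈ Icc 1 M, (1/2:ℝ)^k/(k:ℝ)^2) - ∑' j : ℕ, (1/2:ℝ)^(j+1)/((j:ℝ)+1)^2|
      ≤ (1/2:ℝ)^M := by
  have h0 : ∑ k ∈ Icc 1 M, (1/2:ℝ)^k/(k:ℝ)^2
      = ∑ j ∈ Finset.range M, (1/2:ℝ)^(j+1)/((j:ℝ)+1)^2 := by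
    rw [← Finset.Ico_add_one_right_eq_Icc, Finset.sum_Ico_eq_sum_range]
    refine Finset.sum_congr rfl fun j _ => ?_
    rw [add_comm 1 j]
    push_cast
    ring
  have hadd := Summable.sum_add_tsum_nat_add (f := fun j : ℕ => (1/2:ℝ)^(j+1)/((j:ℝ)+1)^2) M Tsummable
  have htail : |∑' j : ℕ, (1/2:ℝ)^(j+M+1)/(((j+M:ℕ):ℝ)+1)^2| ≤ (1/2:ℝ)^M := by
    have hs1 : Summable (fun j : ℕ => (1/2:ℝ)^(j+M+1)/(((j+M:ℕ):ℝ)+1)^2) := by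
      exact_mod_cast (summable_nat_add_iff M).mpr Tsummable
    have hs2 : Summable (fun j : ℕ => (1/2:ℝ)^(j+(M+1))) :=
      (summable_nat_add_iff (M+1)).mpr
        (summable_geometric_of_lt_one (by norm_num) (by norm_num))
    have hle : ∀ j : ℕ, (1/2:ℝ)^(j+M+1)/(((j+M:ℕ):ℝ)+1)^2 ≤ (1/2:ℝ)^(j+(M+1)) := by
      intro j
      have he : j + M + 1 = j + (M+1) := by omega
      rw [he]
      calc (1/2:ℝ)^(j+(M+1))/(((j+M:ℕ):ℝ)+1)^2 ≤ (1/2:ℝ)^(j+(M+1))/1 := by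
            gcongr
            · nlinarith [Nat.cast_nonneg (α := ℝ) (j+M)]
        _ = (1/2:ℝ)^(j+(M+1)) := div_one _
    have hnonneg : 0 ≤ ∑' j : ℕ, (1/2:ℝ)^(j+M+1)/(((j+M:ℕ):ℝ)+1)^2 :=
      tsum_nonneg fun j => by positivity
    rw [abs_of_nonneg hnonneg]
    calc ∑' j : ℕ, (1/2:ℝ)^(j+M+1)/(((j+M:ℕ):ℝ)+1)^2
        ≤ ∑' j : ℕ, (1/2:ℝ)^(j+(M+1)) := Summable.tsum_le_tsum hle hs1 hs2
      _ = (1/2:ℝ)^M := by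
          have : ∀ j : ℕ, (1/2:ℝ)^(j+(M+1)) = (1/2:ℝ)^j * (1/2:ℝ)^(M+1) :=
            fun j => pow_add _ _ _
          rw [tsum_congr this, tsum_mul_right,
            tsum_geometric_of_lt_one (by norm_num) (by norm_num)]
          rw [pow_succ]
          ring
    
  rw [h0]
  have heq : (∑ j ∈ Finset.range M, (1/2:ℝ)^(j+1)/((j:ℝ)+1)^2)
      - ∑' j : ℕ, (1/2:ℝ)^(j+1)/((j:ℝ)+1)^2
      = -(∑' j : ℕ, (1/2:ℝ)^(j+M+1)/(((j+M:ℕ):ℝ)+1)^2) := by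
    linarith [hadd]
  rw [heq, abs_neg]
  exact htail

lemma pi_facts : (9:ℝ) < Real.pi^2 := by
  nlinarith [Real.pi_gt_three]

lemma perk (x : ℝ) (M k : ℕ) (hk1 : 1 ≤ k) (hkM : k ≤ M) (hMfl : M = ⌊x⌋₊)
    (hx2 : 2 ≤ x) :
    |(∑ n ∈ Icc 1 (M/k), (Nat.totient n : ℝ)) - 3/Real.pi^2 * (x/(k:ℝ))^2|
      ≤ 2*x*(Real.log x + 1) + 2*x := by
  have hx0 : (0:ℝ) < x := by linarith
  have hMx : (M:ℝ) ≤ x := hMfl ▸ Nat.floor_le hx0.le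
  set N : ℕ := M / k with hN
  have hN1 : 1 ≤ N := (Nat.one_le_div_iff (by omega)).mpr hkM
  have hk0 : (0:ℝ) < (k:ℝ) := by exact_mod_cast hk1
  -- N = ⌊x / k⌋₊
  have hNfl : N = ⌊x / (k:ℝ)⌋₊ := by rw [hN, hMfl, Nat.floor_div_natCast]
  have hNle : (N:ℝ) ≤ x / (k:ℝ) := by
    rw [hNfl]; exact Nat.floor_le (by positivity)
  have hNlt : x / (k:ℝ) < (N:ℝ) + 1 := by
    rw [hNfl]; exact Nat.lt_floor_add_one _
  have hNx : (N:ℝ) ≤ x := by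
    calc (N:ℝ) ≤ (M:ℝ) := by exact_mod_cast Nat.div_le_self M k
      _ ≤ x := hMx
  have hlogN : Real.log N ≤ Real.log x := by
    apply Real.log_le_log (by exact_mod_cast hN1) hNx
  have h1 : |(∑ n ∈ Icc 1 N, (Nat.totient n : ℝ)) - 3/Real.pi^2 * (N:ℝ)^2|
      ≤ 2*x*(Real.log x + 1) := by
    refine (phi_bound N hN1).trans ?_
    have hlN : 0 ≤ Real.log N := Real.log_natCast_nonneg N
    have hN0 : (0:ℝ) ≤ (N:ℝ) := by positivity
    nlinarith
  have h2 : |3/Real.pi^2 * (N:ℝ)^2 - 3/Real.pi^2 * (x/(k:ℝ))^2| ≤ 2*x := by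
    have hpi := pi_facts
    have hfrac : 0 < 3/Real.pi^2 ∧ 3/Real.pi^2 ≤ 1 := by
      constructor
      · positivity
      · rw [div_le_one (by nlinarith)]; nlinarith
    rw [← mul_sub, abs_mul, abs_of_nonneg hfrac.1.le]
    have hk1' : (1:ℝ) ≤ (k:ℝ) := by exact_mod_cast hk1
    have hxk : x / (k:ℝ) ≤ x := by
      rw [div_le_iff₀ hk0]
      nlinarith
    have habs : |(N:ℝ)^2 - (x/(k:ℝ))^2| ≤ 2*x := by
      rw [abs_le]
      have hN0 : (0:ℝ) ≤ (N:ℝ) := by positivity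
      constructor <;> nlinarith
    calc 3/Real.pi^2 * |(N:ℝ)^2 - (x/(k:ℝ))^2| ≤ 1 * (2*x) :=
          mul_le_mul hfrac.2 habs (abs_nonneg _) zero_le_one
      _ = 2*x := one_mul _
  calc |(∑ n ∈ Icc 1 N, (Nat.totient n : ℝ)) - 3/Real.pi^2 * (x/(k:ℝ))^2|
      ≤ |(∑ n ∈ Icc 1 N, (Nat.totient n : ℝ)) - 3/Real.pi^2 * (N:ℝ)^2|
        + |3/Real.pi^2 * (N:ℝ)^2 - 3/Real.pi^2 * (x/(k:ℝ))^2| := abs_sub_le _ _ _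
    _ ≤ 2*x*(Real.log x + 1) + 2*x := add_le_add h1 h2

lemma pow_sq_le (M : ℕ) (h : 2 ≤ M) : ((M:ℝ)+1)^2 ≤ 4 * 2^M := by
  induction M, h using Nat.le_induction with
  | base => norm_num
  | succ n hn ih =>
    have h2 : (2:ℝ) ≤ (n:ℝ) := by exact_mod_cast hn
    push_cast
    rw [pow_succ (2:ℝ) n]
    push_cast at ih
    nlinarith [ih, h2, sq_nonneg ((n:ℝ) - 1)]

set_option maxHeartbeats 2000000 in
theorem stmt_18 :
    ∃ C : ℝ, 0 < C ∧ ∀ x : ℝ, 2 ≤ x →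
      |(∑ n ∈ Finset.Icc 1 ⌊x⌋₊,
          (Nat.totient n : ℝ) * (1 - (1 / 2 : ℝ) ^ ⌊x / (n : ℝ)⌋₊)) -
        (3 / Real.pi ^ 2) *
          (∑' k : ℕ, (1 / 2 : ℝ) ^ (k + 1) / ((k : ℝ) + 1) ^ 2) * x ^ 2|
        ≤ C * x * (Real.log x) ^ 2 := by
  refine ⟨100, by norm_num, fun x hx => ?_⟩
  have hx0 : (0:ℝ) < x := by linarith
  have hx1 : (1:ℝ) ≤ x := by linarith
  set M := ⌊x⌋₊ with hMdef
  have hM2 : 2 ≤ M := Nat.le_floor (by exact_mod_cast hx)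
  have hMx : (M:ℝ) ≤ x := Nat.floor_le hx0.le
  have hxM : x < (M:ℝ) + 1 := Nat.lt_floor_add_one x
  set T := ∑' k : ℕ, (1 / 2 : ℝ) ^ (k + 1) / ((k : ℝ) + 1) ^ 2 with hTdef
  set B := 2*x*(Real.log x + 1) + 2*x with hBdef
  have hlogx : 0 ≤ Real.log x := Real.log_nonneg hx1
  have hB0 : 0 ≤ B := by rw [hBdef]; nlinarith
  have hpi := pi_facts
  have hfrac1 : 0 < 3/Real.pi^2 := by positivity
  have hfrac2 : 3/Real.pi^2 ≤ 1 := by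
    rw [div_le_one (by nlinarith)]; nlinarith
  -- Step A : rewrite the sum
  have hA : ∑ n ∈ Icc 1 M, (Nat.totient n : ℝ) * (1 - (1/2:ℝ)^⌊x/(n:ℝ)⌋₊)
      = ∑ k ∈ Icc 1 M, (1/2:ℝ)^k * (∑ n ∈ Icc 1 (M/k), (Nat.totient n : ℝ)) := by
    have e1 : ∀ n ∈ Icc 1 M, (Nat.totient n : ℝ) * (1 - (1/2:ℝ)^⌊x/(n:ℝ)⌋₊)
        = ∑ k ∈ Icc 1 (M/n), (Nat.totient n : ℝ) * (1/2:ℝ)^k := by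
      intro n hn
      rw [Nat.floor_div_natCast, ← hMdef, ← geom (M/n), Finset.mul_sum]
    rw [Finset.sum_congr rfl e1, key_swap M (fun n k => (Nat.totient n : ℝ) * (1/2:ℝ)^k)]
    refine Finset.sum_congr rfl fun k hk => ?_
    rw [← Finset.sum_mul, mul_comm]
  rw [hA]
  -- first piece
  have h1 : |(∑ k ∈ Icc 1 M, (1/2:ℝ)^k * (∑ n ∈ Icc 1 (M/k), (Nat.totient n : ℝ)))
      - ∑ k ∈ Icc 1 M, (1/2:ℝ)^k * (3/Real.pi^2 * (x/(k:ℝ))^2)| ≤ B := by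
    rw [← Finset.sum_sub_distrib]
    refine (Finset.abs_sum_le_sum_abs _ _).trans ?_
    have hterm : ∀ k ∈ Icc 1 M, |(1/2:ℝ)^k * (∑ n ∈ Icc 1 (M/k), (Nat.totient n : ℝ))
        - (1/2:ℝ)^k * (3/Real.pi^2 * (x/(k:ℝ))^2)| ≤ (1/2:ℝ)^k * B := by
      intro k hk
      obtain ⟨hk1, hkM⟩ := Finset.mem_Icc.mp hk
      rw [← mul_sub, abs_mul, abs_of_nonneg (by positivity : (0:ℝ) ≤ (1/2:ℝ)^k)]
      exact mul_le_mul_of_nonneg_left (perk x M k hk1 hkM hMdef hx) (by positivity)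
    refine (Finset.sum_le_sum hterm).trans ?_
    rw [← Finset.sum_mul]
    have hgeo : ∑ k ∈ Icc 1 M, (1/2:ℝ)^k ≤ 1 := by
      rw [geom]
      have : (0:ℝ) ≤ (1/2:ℝ)^M := by positivity
      linarith
    calc (∑ k ∈ Icc 1 M, (1/2:ℝ)^k) * B ≤ 1 * B := mul_le_mul_of_nonneg_right hgeo hB0
      _ = B := one_mul _
  -- second piece
  have h2 : |(∑ k ∈ Icc 1 M, (1/2:ℝ)^k * (3/Real.pi^2 * (x/(k:ℝ))^2))
      - 3/Real.pi^2 * T * x^2| ≤ 2*x := by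
    have hq : ∑ k ∈ Icc 1 M, (1/2:ℝ)^k * (3/Real.pi^2 * (x/(k:ℝ))^2)
        = 3/Real.pi^2 * x^2 * ∑ k ∈ Icc 1 M, (1/2:ℝ)^k/(k:ℝ)^2 := by
      rw [Finset.mul_sum]
      refine Finset.sum_congr rfl fun k hk => ?_
      have hk1 := (Finset.mem_Icc.mp hk).1
      have hk0 : ((k:ℝ)) ≠ 0 := by positivity
      rw [div_pow]
      field_simp
    rw [hq, show 3/Real.pi^2 * T * x^2 = 3/Real.pi^2 * x^2 * T by ring, ← mul_sub, abs_mul,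
      abs_of_nonneg (by positivity : (0:ℝ) ≤ 3/Real.pi^2 * x^2)]
    have hT := T_partial M
    rw [← hTdef] at hT
    calc 3/Real.pi^2 * x^2 * |(∑ k ∈ Icc 1 M, (1/2:ℝ)^k/(k:ℝ)^2) - T|
        ≤ 3/Real.pi^2 * x^2 * (1/2:ℝ)^M :=
          mul_le_mul_of_nonneg_left hT (by positivity)
      _ ≤ 1 * (x^2 * (1/2:ℝ)^M) := by
          rw [mul_assoc]
          exact mul_le_mul_of_nonneg_right hfrac2 (by positivity)
      _ ≤ 2*x := by
          rw [one_mul]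
          have hps := pow_sq_le M hM2
          have hx2M : x^2 ≤ ((M:ℝ)+1)^2 := by nlinarith
          have h2M : (0:ℝ) < 2^M := by positivity
          have hhalf : (1/2:ℝ)^M = 1/2^M := by
            rw [div_pow, one_pow]
          rw [hhalf]
          have : x^2 * (1/(2:ℝ)^M) ≤ 4 := by
            rw [mul_one_div, div_le_iff₀ h2M]
            nlinarith
          nlinarith
  -- combine
  calc |(∑ k ∈ Icc 1 M, (1/2:ℝ)^k * (∑ n ∈ Icc 1 (M/k), (Nat.totient n : ℝ)))
      - 3/Real.pi^2 * T * x^2|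
      ≤ B + 2*x := by
        have := abs_sub_le
          (∑ k ∈ Icc 1 M, (1/2:ℝ)^k * (∑ n ∈ Icc 1 (M/k), (Nat.totient n : ℝ)))
          (∑ k ∈ Icc 1 M, (1/2:ℝ)^k * (3/Real.pi^2 * (x/(k:ℝ))^2))
          (3/Real.pi^2 * T * x^2)
        linarith
    _ ≤ 100 * x * (Real.log x)^2 := by
        rw [hBdef]
        have hL2 : Real.log 2 ≤ Real.log x := Real.log_le_log (by norm_num) hx
        have hL29 : (0.6931471803:ℝ) < Real.log 2 := Real.log_two_gt_d9
        set L := Real.log x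
        have hL : (0.69:ℝ) ≤ L := by linarith
        have key : 2*L + 6 ≤ 100*L^2 := by
          nlinarith [sq_nonneg (L - 0.69), sq_nonneg L]
        nlinarith [mul_le_mul_of_nonneg_left key hx0.le]
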